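/- Associativity of composition of concrete bicharacters: let V¹ ∈ U(H₁⊗H₂), V² ∈ U(H₂⊗H₃), V³ ∈ U(H₃⊗H₄) be unitaries, and suppose there exist unitaries V²¹ ∈ U(H₁⊗H₃), V³² ∈ U(H₂⊗H₄), A ∈ U(H₁⊗H₄), B ∈ U(H₁⊗H₄) satisfying V²₂₃V¹₁₂ = V¹₁₂V²¹₁₃V²₂₃ (on H₁⊗H₂⊗H₃), V³₃₄V²₂₃ = V²₂₃V³²₂₄V³₃₄ (on H₂⊗H₃⊗H₄), V³₂₃V²¹₁₂ = V²¹₁₂A₁₃V³₂₃ (on H₁⊗H₃⊗H₄), and V³²₂₃V¹₁₂ = V¹₁₂B₁₃V³²₂₃ (on H₁⊗H₂⊗H₄). Then A = B. -/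
import Mathlib

/-!
STATEMENT 9 (associativity of composition of concrete bicharacters).
`G` plays the role of `U(H₁⊗H₂⊗H₃⊗H₄)`; `V1 = V¹₁₂`, `V2 = V²₂₃`,
`V3 = V³₃₄`, `V21 = V²¹₁₃`, `V32 = V³²₂₄`, `A = A₁₄`, `B = B₁₄` are the
indicated leg placements.  `h1`–`h4` are the four composition relations
(amplified to the fourfold tensor product), and `c13`, `cA2`, `cB2` record
that operators acting on disjoint legs commute.  Conclusion: `A = B`.
-/
theorem stmt9 {G : Type*} [Group G]
    (V1 V2 V3 V21 V32 A B : G)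
    (h1 : V2 * V1 = V1 * V21 * V2)
    (h2 : V3 * V2 = V2 * V32 * V3)
    (h3 : V3 * V21 = V21 * A * V3)
    (h4 : V32 * V1 = V1 * B * V32)
    (c13 : V1 * V3 = V3 * V1)
    (cA2 : A * V2 = V2 * A)
    (cB2 : B * V2 = V2 * B) :
    A = B := by
  have hA : V3 * V2 * V1 = V1 * V21 * V2 * A * V32 * V3 := by
    calc V3 * V2 * V1 = V3 * (V2 * V1) := by group
      _ = V3 * (V1 * V21 * V2) := by rw [h1]
      _ = (V3 * V1) * V21 * V2 := by group
      _ = (V1 * V3) * V21 * V2 := by rw [c13]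
      _ = V1 * (V3 * V21) * V2 := by group
      _ = V1 * (V21 * A * V3) * V2 := by rw [h3]
      _ = V1 * V21 * A * (V3 * V2) := by group
      _ = V1 * V21 * A * (V2 * V32 * V3) := by rw [h2]
      _ = V1 * V21 * (A * V2) * V32 * V3 := by group
      _ = V1 * V21 * (V2 * A) * V32 * V3 := by rw [cA2]
      _ = V1 * V21 * V2 * A * V32 * V3 := by group
  have hB : V3 * V2 * V1 = V1 * V21 * V2 * B * V32 * V3 := by
    calc V3 * V2 * V1 = (V3 * V2) * V1 := by group
      _ = V2 * V32 * V3 * V1 := by rw [h2]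
      _ = V2 * V32 * (V3 * V1) := by group
      _ = V2 * V32 * (V1 * V3) := by rw [← c13]
      _ = V2 * (V32 * V1) * V3 := by group
      _ = V2 * (V1 * B * V32) * V3 := by rw [h4]
      _ = (V2 * V1) * B * V32 * V3 := by group
      _ = (V1 * V21 * V2) * B * V32 * V3 := by rw [h1]
      _ = V1 * V21 * V2 * B * V32 * V3 := by group
  have h6 := congrArg (fun x => (V1 * V21 * V2)⁻¹ * x * V3⁻¹ * V32⁻¹) (hA.symm.trans hB)
  simpa [mul_assoc] using h6
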